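/- Let u = (p*, q*) ∈ ℕ² with p* < q*, and let c_∞ > 0 satisfy c_∞⁻¹ < q* (working with the normalization δ rather than 2δ). Suppose v_n = (p_n, q_n) ∈ ℕ² with q_n < p_n for all n and δ(u, v_n) decreases strictly to c_∞ with δ(u,v_n) > c_∞ for all n. Then this is impossible: only finitely many lattice points v lie below the line through u and (c_∞⁻¹, c_∞⁻¹), so δ(u, v_n) must stabilize, contradicting strict decrease. Conclusion: every strictly decreasing sequence of such δ-values converges to a limit of the form 1/q* (hence to an element of {1/N : N ∈ ℕ}) or stabilizes. -/
import Mathlib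


open Filter

/-- Impossibility of a strictly decreasing sequence of δ-values staying above its
limit c_∞ when c_∞⁻¹ < q*: with u = (p*,q*) ∈ ℕ², p* < q*, and v_n ∈ ℕ² strictly
below the diagonal, if δ(u,v_n) is strictly decreasing, always > c_∞, and converges
to c_∞, then we reach a contradiction (only finitely many lattice points lie below
the line through u and (c_∞⁻¹, c_∞⁻¹), so the δ-values must stabilize). -/
theorem stmt8 (p' q' : ℕ) (hpq : p' < q') (cinf : ℝ) (hc : 0 < cinf)
    (hcq : cinf⁻¹ < (q' : ℝ)) (v : ℕ → ℕ × ℕ) (hv : ∀ n, (v n).2 < (v n).1)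
    (δ : ℕ → ℝ)
    (hδ : ∀ n, δ n =
      ((((v n).1 : ℝ) - (v n).2) + ((q' : ℝ) - p')) /
        ((q' : ℝ) * (v n).1 - (p' : ℝ) * (v n).2))
    (hanti : StrictAnti δ) (habove : ∀ n, cinf < δ n)
    (hlim : Tendsto δ atTop (nhds cinf)) :
    False := by
  have h1 : 1 < cinf * q' := by
    have := mul_lt_mul_of_pos_left hcq hc
    rwa [mul_inv_cancel₀ hc.ne'] at this
  have hpq' : (p' : ℝ) < q' := by exact_mod_cast hpq
  set B : ℝ := max (q' : ℝ) (((q' : ℝ) - p') / (cinf * q' - 1)) with hB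
  have hbound : ∀ n, ((v n).1 : ℝ) < B := by
    intro n
    set pn : ℝ := ((v n).1 : ℝ)
    set qn : ℝ := ((v n).2 : ℝ)
    have hqp : qn + 1 ≤ pn := by
      show ((v n).2 : ℝ) + 1 ≤ ((v n).1 : ℝ)
      exact_mod_cast hv n
    have hq0 : 0 ≤ qn := Nat.cast_nonneg _
    have hden : 0 < (q' : ℝ) * pn - (p' : ℝ) * qn := by nlinarith
    have key : cinf * ((q' : ℝ) * pn - (p' : ℝ) * qn) < (pn - qn) + ((q' : ℝ) - p') := by
      have := habove n
      rw [hδ n] at this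
      have := (lt_div_iff₀ hden).mp this
      linarith
    rcases le_or_gt 1 (cinf * p') with hcase | hcase
    · have : pn < (q' : ℝ) := by nlinarith
      exact lt_of_lt_of_le this (le_max_left _ _)
    · have hpos : 0 < cinf * q' - 1 := by linarith
      have : pn < ((q' : ℝ) - p') / (cinf * q' - 1) := by
        rw [lt_div_iff₀ hpos]
        nlinarith
      exact lt_of_lt_of_le this (le_max_right _ _)
  set N : ℕ := ⌈B⌉₊
  have hmem : ∀ n, v n ∈ (Finset.range (N + 1) ×ˢ Finset.range (N + 1)) := by
    intro n
    have h1' : ((v n).1 : ℝ) < N + 1 := lt_of_lt_of_le (hbound n)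
      (le_trans (Nat.le_ceil B) (by push_cast; linarith))
    have hp : (v n).1 < N + 1 := by exact_mod_cast h1'
    have hq : (v n).2 < N + 1 := lt_trans (hv n) hp
    simp [Finset.mem_product, Finset.mem_range, hp, hq]
  have hinj : Function.Injective v := by
    intro m n hmn
    have : δ m = δ n := by rw [hδ m, hδ n, hmn]
    exact hanti.injective this
  have hfin : (Set.range v).Finite :=
    Set.Finite.subset (Finset.range (N + 1) ×ˢ Finset.range (N + 1)).finite_toSet
      (by rintro _ ⟨n, rfl⟩; exact hmem n)
  exact (Set.infinite_range_of_injective hinj) hfin
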